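/- Let A be a unital associative ℝ-algebra with involution, I a left ideal of A, and T a set of pairs (π, v) where π is a *-representation of A on a real inner product space, v is a vector in that space, and π(q)v = 0 for all q ∈ I. If I = {a ∈ A : π(a)v = 0 for every (π, v) ∈ T}, then I is a real left ideal. -/

import Mathlib

noncomputable section

/-- If a left ideal `I` of a unital `ℝ`-algebra with involution is the annihilator ideal
`𝒥(T)` of a family `T` of `*`-representation points vanishing on `I`, then `I` is a real
left ideal: whenever `∑ aⱼ* aⱼ ∈ I + I*`, every `aⱼ ∈ I`. -/
theorem stmt2 (A : Type) [Ring A] [Algebra ℝ A] [StarRing A] [StarModule ℝ A]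
    (I : Submodule A A)
    -- the family `T` of `*`-representation points `(π i, v i)`
    (ι : Type) (V : ι → Type)
    [∀ i, NormedAddCommGroup (V i)] [∀ i, InnerProductSpace ℝ (V i)]
    (π : ∀ i, A →ₐ[ℝ] (V i →ₗ[ℝ] V i)) (v : ∀ i, V i)
    (hrep : ∀ i (a : A) (u w : V i), (inner ℝ (π i a u) w : ℝ) = inner ℝ u (π i (star a) w))
    (hT : ∀ i, ∀ q ∈ I, π i q (v i) = 0)
    (hI : ∀ a : A, a ∈ I ↔ ∀ i, π i a (v i) = 0) :
    ∀ (r : ℕ) (a : Fin r → A),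
      (∃ u ∈ I, ∃ w ∈ I, (∑ j, star (a j) * a j) = u + star w) → ∀ j, a j ∈ I := by
  intro r a ⟨u, hu, w, hw, hsum⟩ j
  rw [hI]
  intro i
  -- key: ∑ ‖π i (a k) (v i)‖² = 0
  have key : (∑ k, ‖π i (a k) (v i)‖ ^ 2) = 0 := by
    have h1 : (∑ k, ‖π i (a k) (v i)‖ ^ 2)
        = inner ℝ (π i (∑ k, star (a k) * a k) (v i)) (v i) := by
      rw [map_sum]
      simp only [LinearMap.coe_sum, Finset.sum_apply, sum_inner]
      refine Finset.sum_congr rfl fun k _ => ?_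
      rw [map_mul, Module.End.mul_apply, hrep i, star_star, real_inner_self_eq_norm_sq]
    rw [h1, hsum, map_add]
    have hu0 : π i u (v i) = 0 := hT i u hu
    have hw0 : π i w (v i) = 0 := hT i w hw
    rw [LinearMap.add_apply, hu0, zero_add]
    have : (inner ℝ (π i (star w) (v i)) (v i) : ℝ)
        = inner ℝ (v i) (π i w (v i)) := by rw [hrep i, star_star]
    rw [this, hw0, inner_zero_right]
  have hk : ∀ k ∈ Finset.univ, (0:ℝ) ≤ ‖π i (a k) (v i)‖ ^ 2 :=
    fun k _ => sq_nonneg _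
  have := (Finset.sum_eq_zero_iff_of_nonneg hk).mp key j (Finset.mem_univ j)
  have : ‖π i (a j) (v i)‖ = 0 := by nlinarith [norm_nonneg (π i (a j) (v i))]
  exact norm_eq_zero.mp this
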